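/- Let A be a q×n complex matrix, W a nonzero n×q complex matrix, and m a positive integer. Then the system of matrix equations X = W·A^{D,W}·W·A·X and A·X = A·W·A^{Ⓦ_m,W}·W·A·A^† in the unknown n×q matrix X has the unique solution X = W·A^{Ⓦ_m,W}·W·A·A^†. -/
import Mathlib


open Matrix

/-- Index of a square matrix: least `d` with `rank (B^d) = rank (B^(d+1))`. -/
noncomputable def matInd {ι : Type*} [Fintype ι] [DecidableEq ι] (B : Matrix ι ι ℂ) : ℕ :=
  sInf {d : ℕ | (B ^ d).rank = (B ^ (d + 1)).rank}

/-- `X` is the Moore-Penrose inverse of `A` (four Penrose equations). -/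
noncomputable def IsMP {ι κ : Type*} [Fintype ι] [Fintype κ] (A : Matrix ι κ ℂ) (X : Matrix κ ι ℂ) : Prop :=
  A * X * A = A ∧ X * A * X = X ∧ (A * X)ᴴ = A * X ∧ (X * A)ᴴ = X * A

/-- Column space (range) of a matrix. -/
noncomputable def mrange {ι κ : Type*} [Fintype κ] (M : Matrix ι κ ℂ) : Submodule ℂ (ι → ℂ) :=
  LinearMap.range M.mulVecLin

/-- Null space of a matrix. -/
noncomputable def mker {ι κ : Type*} [Fintype κ] (M : Matrix ι κ ℂ) : Submodule ℂ (κ → ℂ) :=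
  LinearMap.ker M.mulVecLin

/-- `X` is the core-EP inverse of `B`. -/
noncomputable def IsCoreEP {ι : Type*} [Fintype ι] [DecidableEq ι] (B X : Matrix ι ι ℂ) : Prop :=
  X * B * X = X ∧ mrange X = mrange (B ^ matInd B) ∧ mrange Xᴴ = mrange (B ^ matInd B)

/-- `X` is the Drazin inverse of `B`. -/
noncomputable def IsDrazin {ι : Type*} [Fintype ι] [DecidableEq ι] (B X : Matrix ι ι ℂ) : Prop :=
  X * B * X = X ∧ B * X = X * B ∧ B ^ (matInd B + 1) * X = B ^ matInd B

/-- `X` is the group inverse of `B`. -/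
noncomputable def IsGroupInv {ι : Type*} [Fintype ι] (B X : Matrix ι ι ℂ) : Prop :=
  B * X * B = B ∧ X * B * X = X ∧ B * X = X * B

/-- Frobenius norm of a matrix. -/
noncomputable def frobNorm {ι κ : Type*} [Fintype ι] [Fintype κ] (M : Matrix ι κ ℂ) : ℝ :=
  Real.sqrt (∑ i, ∑ j, ‖M i j‖ ^ 2)

lemma exists_right_factor {ι κ₁ κ₂ : Type*} [Fintype ι] [Fintype κ₁] [Fintype κ₂]
    [DecidableEq κ₁]
    (M : Matrix ι κ₁ ℂ) (N : Matrix ι κ₂ ℂ)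
    (h : mrange M ≤ mrange N) : ∃ Z : Matrix κ₂ κ₁ ℂ, M = N * Z := by
  have hmem : ∀ j, M.mulVec (Pi.single j 1) ∈ mrange N := fun j => h ⟨Pi.single j 1, rfl⟩
  choose z hz using hmem
  refine ⟨Matrix.of fun i j => z j i, ?_⟩
  ext i j
  have h1 : N.mulVec (z j) i = M.mulVec (Pi.single j 1) i := by rw [← hz j]; rfl
  simp only [Matrix.mulVec, dotProduct] at h1
  simp only [Matrix.mul_apply, Matrix.of_apply]
  rw [h1]
  simp [Pi.single_apply, Finset.sum_ite_eq']

lemma pow_shift {a b : Type*} [Fintype a] [Fintype b] [DecidableEq a] [DecidableEq b]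
    (W : Matrix a b ℂ) (X : Matrix b a ℂ) (m : ℕ) :
    W * (X * W) ^ m = (W * X) ^ m * W := by
  induction m with
  | zero => simp
  | succ m ih =>
    rw [pow_succ, pow_succ, ← Matrix.mul_assoc, ih]
    simp only [Matrix.mul_assoc]

theorem stmt0 {q n : ℕ} (A : Matrix (Fin q) (Fin n) ℂ) (W : Matrix (Fin n) (Fin q) ℂ)
    (hW : W ≠ 0) (m : ℕ) (hm : 0 < m)
    (Adag : Matrix (Fin n) (Fin q) ℂ) (hAdag : IsMP A Adag)
    (WAD : Matrix (Fin n) (Fin n) ℂ) (hWAD : IsDrazin (W * A) WAD)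
    (WAcep : Matrix (Fin n) (Fin n) ℂ) (hWAcep : IsCoreEP (W * A) WAcep)
    (ADW AepW AWGm : Matrix (Fin q) (Fin n) ℂ)
    (hADW : ADW = A * (WAD * WAD))
    (hAepW : AepW = A * (WAcep * WAcep))
    (hAWGm : AWGm = (AepW * W) ^ m * AepW * (W * A) ^ m) :
    ∀ X : Matrix (Fin n) (Fin q) ℂ,
      (X = W * ADW * W * A * X ∧ A * X = A * W * AWGm * W * A * Adag) ↔
        X = W * AWGm * W * A * Adag := by
  obtain ⟨hD1, hD2, hD3⟩ := hWAD
  obtain ⟨hG1, hG2, -⟩ := hWAcep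
  obtain ⟨Z, hZ⟩ := exists_right_factor WAcep ((W * A) ^ matInd (W * A)) hG2.le
  have c : Commute (W * A) WAD := hD2
  have f2' : WAD * (W * A) ^ (matInd (W * A) + 1) = (W * A) ^ matInd (W * A) :=
    (c.pow_left (matInd (W * A) + 1)).eq.symm.trans hD3
  have f1 : WAD * WAD * (W * A) = WAD := by
    calc WAD * WAD * (W * A) = WAD * (WAD * (W * A)) := by rw [Matrix.mul_assoc]
      _ = WAD * ((W * A) * WAD) := by rw [← hD2]
      _ = WAD * (W * A) * WAD := by rw [← Matrix.mul_assoc]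
      _ = WAD := hD1
  have key0 : W * A * WAD * (W * A * WAcep) = W * A * WAcep := by
    rw [hZ]
    calc W * A * WAD * (W * A * ((W * A) ^ matInd (W * A) * Z))
        = W * A * (WAD * (W * A) ^ (matInd (W * A) + 1) * Z) := by
          rw [pow_succ']; simp only [Matrix.mul_assoc]
      _ = W * A * ((W * A) ^ matInd (W * A) * Z) := by rw [f2']
  have keyC : W * A * WAD * (W * (A * (WAcep * WAcep))) = W * (A * (WAcep * WAcep)) := by
    calc W * A * WAD * (W * (A * (WAcep * WAcep)))
        = W * A * WAD * (W * A * WAcep) * WAcep := by simp only [Matrix.mul_assoc]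
      _ = W * A * WAcep * WAcep := by rw [key0]
      _ = W * (A * (WAcep * WAcep)) := by simp only [Matrix.mul_assoc]
  have keyPow : W * A * WAD * (W * (A * (WAcep * WAcep))) ^ (m + 1)
      = (W * (A * (WAcep * WAcep))) ^ (m + 1) := by
    calc W * A * WAD * (W * (A * (WAcep * WAcep))) ^ (m + 1)
        = W * A * WAD * (W * (A * (WAcep * WAcep)))
            * (W * (A * (WAcep * WAcep))) ^ m := by
          rw [pow_succ']; simp only [Matrix.mul_assoc]
      _ = W * (A * (WAcep * WAcep)) * (W * (A * (WAcep * WAcep))) ^ m := by rw [keyC]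
      _ = (W * (A * (WAcep * WAcep))) ^ (m + 1) := (pow_succ' _ m).symm
  have hWAWGm : W * AWGm = (W * (A * (WAcep * WAcep))) ^ (m + 1) * (W * A) ^ m := by
    rw [hAWGm, hAepW]
    calc W * ((A * (WAcep * WAcep) * W) ^ m * (A * (WAcep * WAcep)) * (W * A) ^ m)
        = (W * ((A * (WAcep * WAcep)) * W) ^ m) * ((A * (WAcep * WAcep)) * (W * A) ^ m) := by
          simp only [Matrix.mul_assoc]
      _ = ((W * (A * (WAcep * WAcep))) ^ m * W) * ((A * (WAcep * WAcep)) * (W * A) ^ m) := by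
          rw [pow_shift]
      _ = (W * (A * (WAcep * WAcep))) ^ m * (W * (A * (WAcep * WAcep))) * (W * A) ^ m := by
          simp only [Matrix.mul_assoc]
      _ = (W * (A * (WAcep * WAcep))) ^ (m + 1) * (W * A) ^ m := by rw [← pow_succ]
  have main : W * A * WAD * (W * AWGm) = W * AWGm := by
    rw [hWAWGm]
    calc W * A * WAD * ((W * (A * (WAcep * WAcep))) ^ (m + 1) * (W * A) ^ m)
        = (W * A * WAD * (W * (A * (WAcep * WAcep))) ^ (m + 1)) * (W * A) ^ m := by
          simp only [Matrix.mul_assoc]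
      _ = (W * (A * (WAcep * WAcep))) ^ (m + 1) * (W * A) ^ m := by rw [keyPow]
  have hP0 : W * ADW * W * A = W * A * WAD := by
    rw [hADW]
    calc W * (A * (WAD * WAD)) * W * A = W * A * (WAD * WAD * (W * A)) := by
          simp only [Matrix.mul_assoc]
      _ = W * A * WAD := by rw [f1]
  intro X
  constructor
  · rintro ⟨h1, h2⟩
    rw [hP0] at h1
    have hXX : X = W * A * (WAD * WAD) * (W * (A * X)) := by
      calc X = W * A * WAD * X := h1
        _ = W * A * (WAD * WAD * (W * A)) * X := by rw [f1]
        _ = W * A * (WAD * WAD) * (W * (A * X)) := by simp only [Matrix.mul_assoc]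
    calc X = W * A * (WAD * WAD) * (W * (A * X)) := hXX
      _ = W * A * (WAD * WAD) * (W * (A * W * AWGm * W * A * Adag)) := by rw [h2]
      _ = W * A * (WAD * WAD * (W * A)) * (W * AWGm) * (W * A * Adag) := by
          simp only [Matrix.mul_assoc]
      _ = W * A * WAD * (W * AWGm) * (W * A * Adag) := by rw [f1]
      _ = (W * AWGm) * (W * A * Adag) := by rw [main]
      _ = W * AWGm * W * A * Adag := by simp only [Matrix.mul_assoc]
  · intro hX
    refine ⟨?_, ?_⟩
    · rw [hX]
      calc W * AWGm * W * A * Adag = W * A * WAD * (W * AWGm) * (W * (A * Adag)) := by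
            rw [main]; simp only [Matrix.mul_assoc]
        _ = W * ADW * W * A * (W * AWGm * W * A * Adag) := by
            rw [hP0]; simp only [Matrix.mul_assoc]
    · rw [hX]; simp only [Matrix.mul_assoc]
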